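/- For every nonnegative integer j, j! ≤ (j+1)^(j+1/2) · e^(−j+1). -/

import Mathlib

open Real

lemma factorial_le_aux (n : ℕ) :
    (Nat.factorial (n + 1) : ℝ) ≤ exp 1 * Real.sqrt (n + 1) * (((n : ℝ) + 1) / exp 1) ^ (n + 1) := by
  have h := Stirling.stirlingSeq'_antitone (Nat.zero_le n)
  simp only [Function.comp, Stirling.stirlingSeq_one, Stirling.stirlingSeq, Nat.succ_eq_add_one,
    Nat.zero_add, Nat.cast_add, Nat.cast_one] at h
  have hpos : 0 < Real.sqrt (2 * ((n : ℝ) + 1)) * (((n : ℝ) + 1) / exp 1) ^ (n + 1) := by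
    positivity
  rw [div_le_div_iff₀ hpos (by positivity)] at h
  norm_num at h
  have hs2 : (0:ℝ) < √2 := by positivity
  calc (Nat.factorial (n + 1) : ℝ)
      = (Nat.factorial (n + 1) : ℝ) * (√2 * (exp 1)⁻¹) * (exp 1 / √2) := by
        field_simp
    _ ≤ √2 * √((n : ℝ) + 1) * (((n : ℝ) + 1) / exp 1) ^ (n + 1) * (exp 1 / √2) :=
        mul_le_mul_of_nonneg_right h (by positivity)
    _ = exp 1 * √((n : ℝ) + 1) * (((n : ℝ) + 1) / exp 1) ^ (n + 1) := by
        field_simp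

theorem factorial_le_stirling_bound (j : ℕ) :
    (Nat.factorial j : ℝ) ≤ ((j : ℝ) + 1) ^ ((j : ℝ) + 1 / 2) * Real.exp (-(j : ℝ) + 1) := by
  cases j with
  | zero =>
      simp only [Nat.factorial_zero, Nat.cast_one, Nat.cast_zero, zero_add, neg_zero,
        Real.one_rpow, one_mul]
      exact Real.one_le_exp (by norm_num)
  | succ n =>
      have key := factorial_le_aux n
      have hx : (0:ℝ) < (n : ℝ) + 1 + 1 := by positivity
      have hrw : ((n : ℝ) + 1 + 1) ^ (((n:ℕ)+1 : ℝ) + 1/2)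
          = √((n:ℝ) + 1 + 1) * ((n : ℝ) + 1 + 1) ^ (n + 1 : ℕ) := by
        rw [show (((n:ℕ)+1 : ℝ) + 1/2) = ((n+1 : ℕ) : ℝ) + (1/2 : ℝ) by push_cast; ring,
          Real.rpow_add hx, Real.rpow_natCast, ← Real.rpow_natCast _ (n+1),
          Real.sqrt_eq_rpow]
        ring
      have hexp : Real.exp (-((n:ℕ)+1 : ℝ) + 1) = Real.exp 1 / Real.exp 1 ^ (n + 1 : ℕ) := by
        rw [Real.exp_add, Real.exp_neg, Real.exp_one_pow]
        push_cast
        ring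
      push_cast
      push_cast at hrw hexp
      rw [hrw, hexp]
      rw [div_pow] at key
      calc (Nat.factorial (n + 1) : ℝ)
          ≤ Real.exp 1 * √((n:ℝ) + 1) * (((n:ℝ) + 1) ^ (n+1) / Real.exp 1 ^ (n + 1)) := key
        _ = √((n:ℝ) + 1) * ((n:ℝ) + 1) ^ (n+1) * (Real.exp 1 / Real.exp 1 ^ (n + 1)) := by
            ring
        _ ≤ √((n:ℝ) + 1 + 1) * ((n:ℝ) + 1 + 1) ^ (n+1) * (Real.exp 1 / Real.exp 1 ^ (n + 1)) := by
            gcongr <;> first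
              | exact Real.sqrt_le_sqrt (by linarith)
              | linarith
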